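/- Let L be a field with algebraic closure L̄, and let F ⊆ L[T_1,...,T_r] be a finite set of polynomials such that R := L[T_1,...,T_r]/⟨F⟩ is integral over L. Let g ∈ L[T_1,...,T_r] and let p_g ∈ L[X] be the minimal polynomial of ḡ ∈ R. Then there exists x ∈ L̄^r with f(x)=0 for all f ∈ F and g(x) ≠ 0 if and only if p_g is not of the form X^n. -/

import Mathlib

set_option maxHeartbeats 1000000
set_option synthInstance.maxHeartbeats 100000


/-- Solvability criterion: if `R = L[T_1,…,T_r]/⟨F⟩` is integral over `L`, then there is a
point `x` over the algebraic closure with `f(x) = 0` for all `f ∈ F` and `g(x) ≠ 0` if and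
only if the minimal polynomial of the class of `g` in `R` is not of the form `X^n`. -/
theorem solvable_iff_minpoly_not_monomial {L : Type*} [Field L] {r : ℕ}
    (F : Finset (MvPolynomial (Fin r) L)) (g : MvPolynomial (Fin r) L)
    (hint : Algebra.IsIntegral L
      (MvPolynomial (Fin r) L ⧸ Ideal.span (F : Set (MvPolynomial (Fin r) L)))) :
    (∃ x : Fin r → AlgebraicClosure L,
        (∀ f ∈ F, MvPolynomial.aeval x f = 0) ∧ MvPolynomial.aeval x g ≠ 0) ↔
      ¬ ∃ n : ℕ, minpoly L
          (Ideal.Quotient.mk (Ideal.span (F : Set (MvPolynomial (Fin r) L))) g) =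
            Polynomial.X ^ n := by
  set I := Ideal.span (F : Set (MvPolynomial (Fin r) L)) with hI
  set gb := Ideal.Quotient.mk I g with hgb
  -- Step 1: minpoly is a power of X iff `gb` is nilpotent.
  have key : (∃ n : ℕ, minpoly L gb = Polynomial.X ^ n) ↔ IsNilpotent gb := by
    constructor
    · rintro ⟨n, hn⟩
      refine ⟨n, ?_⟩
      have h := minpoly.aeval L gb
      rwa [hn, map_pow, Polynomial.aeval_X] at h
    · rintro ⟨n, hn⟩
      have hdvd : minpoly L gb ∣ Polynomial.X ^ n :=
        minpoly.dvd L gb (by rw [map_pow, Polynomial.aeval_X]; exact hn)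
      obtain ⟨i, _, hassoc⟩ := (dvd_prime_pow Polynomial.prime_X n).mp hdvd
      exact ⟨i, Polynomial.eq_of_monic_of_associated
        (minpoly.monic (hint.isIntegral gb)) (Polynomial.monic_X_pow i) hassoc⟩
  rw [not_congr key]
  constructor
  · rintro ⟨x, hx0, hxg⟩ ⟨n, hn⟩
    -- `g^n ∈ I`, so `(g(x))^n = 0`, contradicting `g(x) ≠ 0`.
    have hmem : g ^ n ∈ I := by
      rw [← Ideal.Quotient.eq_zero_iff_mem, map_pow]
      exact hn
    have hker : I ≤ RingHom.ker (MvPolynomial.aeval x).toRingHom := by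
      rw [hI, Ideal.span_le]
      intro f hf
      exact hx0 f hf
    have h0 : (MvPolynomial.aeval x g) ^ n = 0 := by
      have := hker hmem
      rwa [RingHom.mem_ker, AlgHom.toRingHom_eq_coe, RingHom.coe_coe, map_pow] at this
    obtain ⟨hz, -⟩ := pow_eq_zero_iff'.mp h0
    exact hxg hz
  · intro hnil
    -- `gb` is not nilpotent, so there is a prime `p` of `R` avoiding it.
    have hgnr : gb ∉ nilradical _ := fun h => hnil (mem_nilradical.mp h)
    have hex : ∃ p : Ideal (MvPolynomial (Fin r) L ⧸ I), p.IsPrime ∧ gb ∉ p := by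
      rw [nilradical_eq_sInf, Submodule.mem_sInf] at hgnr
      push_neg at hgnr
      obtain ⟨p, hp, hgp⟩ := hgnr
      exact ⟨p, hp, hgp⟩
    obtain ⟨p, hp, hgp⟩ := hex
    haveI : p.IsPrime := hp
    -- The quotient `R/p` is a field, integral (hence algebraic) over `L`.
    haveI : Algebra.IsIntegral L ((MvPolynomial (Fin r) L ⧸ I) ⧸ p) := by
      constructor
      intro z
      obtain ⟨y, rfl⟩ := Ideal.Quotient.mk_surjective z
      exact (hint.isIntegral y).map (Ideal.Quotient.mkₐ L p)
    have hinj : Function.Injective (algebraMap L ((MvPolynomial (Fin r) L ⧸ I) ⧸ p)) :=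
      (algebraMap L _).injective
    haveI : NoZeroSMulDivisors L ((MvPolynomial (Fin r) L ⧸ I) ⧸ p) :=
      by infer_instance
    have hfield : IsField ((MvPolynomial (Fin r) L ⧸ I) ⧸ p) :=
      (Algebra.IsIntegral.isField_iff_isField (S := (MvPolynomial (Fin r) L ⧸ I) ⧸ p) hinj).mp (Field.toIsField L)
    haveI : Algebra.IsAlgebraic L ((MvPolynomial (Fin r) L ⧸ I) ⧸ p) :=
      Algebra.IsIntegral.isAlgebraic
    -- Embed `R/p` into the algebraic closure.
    let ψ : ((MvPolynomial (Fin r) L ⧸ I) ⧸ p) →ₐ[L] AlgebraicClosure L :=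
      by haveI : Module.IsTorsionFree L ((MvPolynomial (Fin r) L ⧸ I) ⧸ p) := inferInstance; exact IsAlgClosed.lift (R := L) (S := (MvPolynomial (Fin r) L ⧸ I) ⧸ p) (M := AlgebraicClosure L)
    let χ : MvPolynomial (Fin r) L →ₐ[L] AlgebraicClosure L :=
      ψ.comp ((Ideal.Quotient.mkₐ L p).comp (Ideal.Quotient.mkₐ L I))
    have haev : ∀ q : MvPolynomial (Fin r) L,
        MvPolynomial.aeval (⇑χ ∘ MvPolynomial.X) q = χ q := by
      intro q
      rw [← MvPolynomial.aeval_unique χ]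
    refine ⟨⇑χ ∘ MvPolynomial.X, ?_, ?_⟩
    · intro f hf
      rw [haev f]
      show ψ (Ideal.Quotient.mk p (Ideal.Quotient.mk I f)) = 0
      have hfI : Ideal.Quotient.mk I f = 0 := by
        rw [Ideal.Quotient.eq_zero_iff_mem, hI]
        exact Ideal.subset_span (Finset.mem_coe.mpr hf)
      rw [hfI, map_zero, map_zero]
    · rw [haev g]
      show ψ (Ideal.Quotient.mk p gb) ≠ 0
      have hne : Ideal.Quotient.mk p gb ≠ 0 := fun h =>
        hgp (Ideal.Quotient.eq_zero_iff_mem.mp h)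
      have hψinj : Function.Injective ψ := by
        letI : Field ((MvPolynomial (Fin r) L ⧸ I) ⧸ p) := hfield.toField
        exact ψ.injective
      intro h
      exact hne (hψinj (by rw [h, map_zero]))
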